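/- arXiv:1807.05069 — 2 statements merged into one kernel-verified Lean document; each statement's English description precedes it below -/
import Mathlib

section
/- For a simplicial set X and m ≥ 1, 0 < j < m, the Segal map β^m_j of esd(X) equals the 2-Segal-type map of X associated to the triple (2m+1, m−j, m+j+1): under the identifications esd(X)_m = X_{2m+1}, esd(X)_j = X_{2j+1}, esd(X)_{m−j} = X_{2(m−j)+1}, esd(X)_0 = X_1, the maps ε(ι_s) : [2j+1] → [2m+1] and ε(ι_t) : [2(m−j)+1] → [2m+1] are the face maps with images {m−j,...,m+j+1} and {0,...,m−j, m+j+1,...,2m+1} respectively. -/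
/-- The effect on morphisms of the edgewise subdivision functor `ε : Δ → Δ`. -/
def epsMap (n m : ℕ) (f : Fin (n + 1) → Fin (m + 1)) :
    Fin (2 * n + 2) → Fin (2 * m + 2) := fun i =>
  if (i : ℕ) ≤ n then
    ⟨m - (f ⟨n - (i : ℕ), by omega⟩ : ℕ), by
      have := (f ⟨n - (i : ℕ), by omega⟩).isLt; omega⟩
  else
    ⟨m + 1 + (f ⟨(i : ℕ) - n - 1, by have := i.isLt; omega⟩ : ℕ), by
      have := (f ⟨(i : ℕ) - n - 1, by have := i.isLt; omega⟩).isLt; omega⟩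

/-- For `0 < j < m`, `ε(ι_s) : [2j+1] → [2m+1]` and `ε(ι_t) : [2(m-j)+1] → [2m+1]`
(for `ι_s : [j] → [m], i ↦ i` and `ι_t : [m-j] → [m], i ↦ i+j`) are the face
maps (injective, order-preserving) with images `{m-j, …, m+j+1}` and
`{0,…,m-j} ∪ {m+j+1,…,2m+1}` respectively; in particular these exhibit the
Segal map `β^m_j` of `esd(X)` as the 2-Segal map of `X` for `(2m+1, m-j, m+j+1)`. -/
theorem eps_of_segal_inclusions_are_faces (m j : ℕ) (h0 : 0 < j) (hj : j < m) :
    let ιs : Fin (j + 1) → Fin (m + 1) := fun t => ⟨(t : ℕ), by have := t.isLt; omega⟩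
    let ιt : Fin (m - j + 1) → Fin (m + 1) := fun t =>
      ⟨(t : ℕ) + j, by have := t.isLt; omega⟩
    StrictMono (epsMap j m ιs) ∧
    (Set.range (fun t => ((epsMap j m ιs t : Fin (2 * m + 2)) : ℕ)) =
      Set.Icc (m - j) (m + j + 1)) ∧
    StrictMono (epsMap (m - j) m ιt) ∧
    (Set.range (fun t => ((epsMap (m - j) m ιt t : Fin (2 * m + 2)) : ℕ)) =
      Set.Iic (m - j) ∪ Set.Icc (m + j + 1) (2 * m + 1)) ∧
    -- explicit formulas: `ε(ι_s)(t) = t + (m-j)` and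
    -- `ε(ι_t)(t) = t` for `t ≤ m-j`, `= t + 2j` for `t > m-j`
    (∀ t : Fin (2 * j + 2), ((epsMap j m ιs t : Fin (2 * m + 2)) : ℕ) = (t : ℕ) + (m - j)) ∧
    (∀ t : Fin (2 * (m - j) + 2), ((epsMap (m - j) m ιt t : Fin (2 * m + 2)) : ℕ) =
      if (t : ℕ) ≤ m - j then (t : ℕ) else (t : ℕ) + 2 * j) := by
  intro ιs ιt
  have hs : ∀ t : Fin (2 * j + 2),
      ((epsMap j m ιs t : Fin (2 * m + 2)) : ℕ) = (t : ℕ) + (m - j) := by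
    intro t
    have ht := t.isLt
    simp only [epsMap, ιs]
    split <;> simp <;> omega
  have hT : ∀ t : Fin (2 * (m - j) + 2), ((epsMap (m - j) m ιt t : Fin (2 * m + 2)) : ℕ) =
      if (t : ℕ) ≤ m - j then (t : ℕ) else (t : ℕ) + 2 * j := by
    intro t
    have ht := t.isLt
    simp only [epsMap, ιt]
    split <;> simp <;> omega
  refine ⟨?_, ?_, ?_, ?_, hs, hT⟩
  · intro a b hab
    rw [Fin.lt_def] at hab ⊢
    rw [hs, hs]; omega
  · ext x
    simp only [Set.mem_range, Set.mem_Icc]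
    constructor
    · rintro ⟨t, rfl⟩
      have := t.isLt
      rw [hs]; omega
    · rintro ⟨h1, h2⟩
      exact ⟨⟨x - (m - j), by omega⟩, by rw [hs]; simp; omega⟩
  · intro a b hab
    rw [Fin.lt_def] at hab ⊢
    rw [hT, hT]
    split <;> split <;> omega
  · ext x
    simp only [Set.mem_range, Set.mem_union, Set.mem_Iic, Set.mem_Icc]
    constructor
    · rintro ⟨t, rfl⟩
      have := t.isLt
      rw [hT]; split <;> omega
    · intro h
      rcases h with h | ⟨h1, h2⟩
      · exact ⟨⟨x, by omega⟩, by rw [hT]; simp; omega⟩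
      · refine ⟨⟨x - 2 * j, by omega⟩, ?_⟩
        rw [hT]
        have : ¬ (x - 2 * j ≤ m - j) := by omega
        simp only [this, if_false]
        omega
end

section
/- For every k ≥ 0, the edgewise subdivision esd(Δ[k]) of the standard k-simplex has exactly 2^k nondegenerate k-simplices. -/
/-- `ε(σᵢ) : [2k+1] → [2k-1]`, the image under the edgewise subdivision functor
`ε` of the degeneracy `σᵢ : [k] → [k-1]` (which hits `i` twice); the `i`-th
degeneracy of `esd(X)` is induced by this map. -/
def esdDegen (k : ℕ) (i : Fin k) : Fin (2 * k + 2) → Fin (2 * k) := fun t =>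
  if (t : ℕ) ≤ k then
    ⟨k - 1 - (if k - (t : ℕ) ≤ (i : ℕ) then k - (t : ℕ) else k - (t : ℕ) - 1), by
      have := i.isLt; omega⟩
  else
    ⟨k + (if (t : ℕ) - k - 1 ≤ (i : ℕ) then (t : ℕ) - k - 1 else (t : ℕ) - k - 2), by
      have := i.isLt; have := t.isLt; split <;> omega⟩

namespace EsdAux

lemma esdDegen_coe (k : ℕ) (i : Fin k) (t : Fin (2 * k + 2)) :
    ((esdDegen k i t : Fin (2 * k)) : ℕ) =
      if (t : ℕ) ≤ k then
        k - 1 - (if k - (t : ℕ) ≤ (i : ℕ) then k - (t : ℕ) else k - (t : ℕ) - 1)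
      else
        k + (if (t : ℕ) - k - 1 ≤ (i : ℕ) then (t : ℕ) - k - 1 else (t : ℕ) - k - 2) := by
  unfold esdDegen
  split_ifs <;> rfl

end EsdAux

namespace EsdAux

/-- Extension of `c : Fin k → Bool` to `ℕ`. -/
def extc (k : ℕ) (c : Fin k → Bool) (p : ℕ) : Bool :=
  if h : p < k then c ⟨p, h⟩ else false

/-- The jump of the "decoded" simplex at position `p`. -/
def dstep (k : ℕ) (c : Fin k → Bool) (p : ℕ) : ℕ :=
  if p < k then (if extc k c (k - 1 - p) then 1 else 0)
  else if k < p ∧ p < 2 * k + 1 then (if extc k c (p - k - 1) then 0 else 1)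
  else 0

def Nc (k : ℕ) (c : Fin k → Bool) (t : ℕ) : ℕ := ∑ p ∈ Finset.range t, dstep k c p

lemma Nc_succ (k : ℕ) (c : Fin k → Bool) (t : ℕ) :
    Nc k c (t + 1) = Nc k c t + dstep k c t := Finset.sum_range_succ _ _

lemma Nc_mono (k : ℕ) (c : Fin k → Bool) : Monotone (Nc k c) := fun _ _ h =>
  Finset.sum_le_sum_of_subset (Finset.range_subset_range.mpr h)

lemma sum_range_add' (f : ℕ → ℕ) (m n : ℕ) :
    ∑ p ∈ Finset.range (m + n), f p
      = (∑ p ∈ Finset.range m, f p) + ∑ p ∈ Finset.range n, f (m + p) := by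
  induction n with
  | zero => simp
  | succ n ih =>
    rw [show m + (n + 1) = (m + n) + 1 by omega, Finset.sum_range_succ, ih,
      Finset.sum_range_succ]
    omega

lemma Nc_total (k : ℕ) (c : Fin k → Bool) : Nc k c (2 * k + 1) = k := by
  have h1 : ∀ p < k, dstep k c p = (if extc k c (k - 1 - p) then 1 else 0) := by
    intro p hp; rw [dstep, if_pos hp]
  have h2 : ∀ q < k, dstep k c (k + 1 + q) = (if extc k c q then 0 else 1) := by
    intro q hq
    rw [dstep, if_neg (by omega), if_pos (by omega), show k + 1 + q - k - 1 = q by omega]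
  rw [Nc, show 2 * k + 1 = k + (k + 1) by omega, sum_range_add' _ k (k + 1),
    Finset.sum_range_succ']
  have e0 : dstep k c (k + 0) = 0 := by
    rw [dstep, if_neg (by omega), if_neg (by omega)]
  rw [e0, Nat.add_zero]
  have eA : ∑ p ∈ Finset.range k, dstep k c p
      = ∑ p ∈ Finset.range k, (if extc k c p then 1 else 0) := by
    rw [← Finset.sum_range_reflect (fun p => if extc k c p then 1 else 0) k]
    refine Finset.sum_congr rfl fun p hp => ?_
    rw [Finset.mem_range] at hp
    rw [h1 p hp]
  have eB : ∑ q ∈ Finset.range k, dstep k c (k + (q + 1))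
      = ∑ q ∈ Finset.range k, (if extc k c q then 0 else 1) := by
    refine Finset.sum_congr rfl fun q hq => ?_
    rw [Finset.mem_range] at hq
    rw [show k + (q + 1) = k + 1 + q by omega, h2 q hq]
  rw [eA, eB, ← Finset.sum_add_distrib]
  have : ∀ q ∈ Finset.range k,
      ((if extc k c q then 1 else 0) + if extc k c q then 0 else 1) = 1 := by
    intro q _; by_cases h : extc k c q <;> simp [h]
  rw [Finset.sum_congr rfl this]
  simp

lemma Nc_le (k : ℕ) (c : Fin k → Bool) {t : ℕ} (ht : t ≤ 2 * k + 1) : Nc k c t ≤ k := by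
  calc Nc k c t ≤ Nc k c (2 * k + 1) := Nc_mono k c ht
  _ = k := Nc_total k c

end EsdAux
namespace EsdAux

def Ff (k : ℕ) (f : Fin (2 * k + 2) →o Fin (k + 1)) (p : ℕ) : ℕ :=
  (f ⟨min p (2 * k + 1), by omega⟩ : ℕ)

lemma Ff_eq (k : ℕ) (f : Fin (2 * k + 2) →o Fin (k + 1)) {p : ℕ} (hp : p ≤ 2 * k + 1) :
    Ff k f p = (f ⟨p, by omega⟩ : ℕ) := by
  unfold Ff
  exact congrArg (fun x : Fin (2 * k + 2) => (f x : ℕ)) (Fin.ext (by simp; omega))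

lemma Ff_mono (k : ℕ) (f : Fin (2 * k + 2) →o Fin (k + 1)) : Monotone (Ff k f) := by
  intro a b h
  exact f.monotone (by simp [Fin.mk_le_mk]; omega)

lemma Ff_le (k : ℕ) (f : Fin (2 * k + 2) →o Fin (k + 1)) (p : ℕ) : Ff k f p ≤ k := by
  have := (f ⟨min p (2 * k + 1), by omega⟩).isLt
  unfold Ff; omega

lemma Ff_telescope (k : ℕ) (f : Fin (2 * k + 2) →o Fin (k + 1)) (t : ℕ) :
    Ff k f t = Ff k f 0 + ∑ p ∈ Finset.range t, (Ff k f (p + 1) - Ff k f p) := by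
  induction t with
  | zero => simp
  | succ t ih =>
    rw [Finset.sum_range_succ]
    have h := Ff_mono k f (Nat.le_succ t)
    have h2 : Ff k f t.succ = Ff k f (t + 1) := rfl
    omega

/-- Nondegeneracy, expressed arithmetically. -/
def Good (k : ℕ) (f : Fin (2 * k + 2) →o Fin (k + 1)) : Prop :=
  ∀ i : Fin k, Ff k f (k - 1 - i) < Ff k f (k - i) ∨ Ff k f (k + 1 + i) < Ff k f (k + 2 + i)

def encode (k : ℕ) (f : Fin (2 * k + 2) →o Fin (k + 1)) : Fin k → Bool :=
  fun i => decide (Ff k f (k - 1 - i) < Ff k f (k - i))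

def decodeF (k : ℕ) (c : Fin k → Bool) : Fin (2 * k + 2) →o Fin (k + 1) where
  toFun t := ⟨Nc k c t, by
    have h := Nc_le k c (t := (t : ℕ)) (by have := t.isLt; omega); omega⟩
  monotone' a b hab := by
    simp only [Fin.mk_le_mk]
    exact Nc_mono k c (by exact hab)

lemma decodeF_coe (k : ℕ) (c : Fin k → Bool) (t : Fin (2 * k + 2)) :
    ((decodeF k c t : Fin (k + 1)) : ℕ) = Nc k c t := rfl

end EsdAux
namespace EsdAux

lemma main (k : ℕ) (f : Fin (2 * k + 2) →o Fin (k + 1)) (hf : Good k f) :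
    ∀ t ≤ 2 * k + 1, Ff k f t = Nc k (encode k f) t := by
  have Fmono : ∀ {a b : ℕ}, a ≤ b → Ff k f a ≤ Ff k f b := fun h => Ff_mono k f h
  -- each pair of jumps contributes at least 1
  have hge : ∀ i ∈ Finset.range k,
      1 ≤ (Ff k f ((k - 1 - i) + 1) - Ff k f (k - 1 - i))
          + (Ff k f ((k + 1 + i) + 1) - Ff k f (k + 1 + i)) := by
    intro i hi
    rw [Finset.mem_range] at hi
    have h := hf ⟨i, hi⟩
    simp only [Fin.val_mk] at h
    rw [show (k - 1 - i) + 1 = k - i by omega, show (k + 1 + i) + 1 = k + 2 + i by omega]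
    have m1 := Fmono (show k - 1 - i ≤ k - i by omega)
    have m2 := Fmono (show k + 1 + i ≤ k + 2 + i by omega)
    rcases h with h | h <;> omega
  have hsum : Ff k f 0 + ∑ p ∈ Finset.range (2 * k + 1), (Ff k f (p + 1) - Ff k f p) ≤ k := by
    rw [← Ff_telescope]; exact Ff_le k f _
  -- split the sum
  have hsplit : ∑ p ∈ Finset.range (2 * k + 1), (Ff k f (p + 1) - Ff k f p)
      = (∑ i ∈ Finset.range k, (Ff k f ((k - 1 - i) + 1) - Ff k f (k - 1 - i)))
        + (Ff k f (k + 1) - Ff k f k)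
        + ∑ i ∈ Finset.range k, (Ff k f ((k + 1 + i) + 1) - Ff k f (k + 1 + i)) := by
    rw [show 2 * k + 1 = k + (k + 1) by omega,
      sum_range_add' (fun p => Ff k f (p + 1) - Ff k f p) k (k + 1),
      Finset.sum_range_succ',
      ← Finset.sum_range_reflect (fun p => Ff k f (p + 1) - Ff k f p) k]
    have e1 : ∑ i ∈ Finset.range k, (Ff k f (k + (i + 1) + 1) - Ff k f (k + (i + 1)))
        = ∑ i ∈ Finset.range k, (Ff k f ((k + 1 + i) + 1) - Ff k f (k + 1 + i)) := by
      refine Finset.sum_congr rfl fun i _ => ?_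
      rw [show k + (i + 1) = k + 1 + i by omega]
    rw [e1]
    simp only [Nat.add_zero]
    omega
  have hk : (∑ _i ∈ Finset.range k, (1 : ℕ))
      ≤ ∑ i ∈ Finset.range k,
        ((Ff k f ((k - 1 - i) + 1) - Ff k f (k - 1 - i))
          + (Ff k f ((k + 1 + i) + 1) - Ff k f (k + 1 + i))) :=
    Finset.sum_le_sum hge
  have hone : (∑ _i ∈ Finset.range k, (1 : ℕ)) = k := by simp
  rw [Finset.sum_add_distrib] at hk
  rw [hone] at hk
  have hF0 : Ff k f 0 = 0 := by omega
  have hdk : Ff k f (k + 1) - Ff k f k = 0 := by omega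
  have hpairs_eq : (∑ _i ∈ Finset.range k, (1 : ℕ))
      = ∑ i ∈ Finset.range k,
        ((Ff k f ((k - 1 - i) + 1) - Ff k f (k - 1 - i))
          + (Ff k f ((k + 1 + i) + 1) - Ff k f (k + 1 + i))) := by
    rw [hone, Finset.sum_add_distrib]; omega
  have hpair : ∀ i ∈ Finset.range k,
      (1 : ℕ) = (Ff k f ((k - 1 - i) + 1) - Ff k f (k - 1 - i))
        + (Ff k f ((k + 1 + i) + 1) - Ff k f (k + 1 + i)) :=
    (Finset.sum_eq_sum_iff_of_le hge).mp hpairs_eq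
  -- jump values agree with dstep
  have cdef : ∀ p, p < k → (extc k (encode k f) p
      = decide (Ff k f (k - 1 - p) < Ff k f (k - p))) := by
    intro p hp
    rw [extc, dif_pos hp]
    rfl
  have dstep_eq : ∀ p < 2 * k + 1,
      dstep k (encode k f) p = Ff k f (p + 1) - Ff k f p := by
    intro p hp
    rcases lt_trichotomy p k with h | h | h
    · have hp2 := hpair (k - 1 - p) (Finset.mem_range.mpr (by omega))
      rw [show k - 1 - (k - 1 - p) = p by omega] at hp2
      rw [dstep, if_pos h, cdef (k - 1 - p) (by omega),
        show k - 1 - (k - 1 - p) = p by omega, show k - (k - 1 - p) = p + 1 by omega]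
      have m1 := Fmono (Nat.le_succ p)
      rcases Nat.lt_or_ge (Ff k f p) (Ff k f (p + 1)) with hlt | hge2
      · rw [decide_eq_true hlt, if_pos rfl]; omega
      · rw [decide_eq_false (by omega), if_neg (by simp)]; omega
    · subst h
      rw [dstep, if_neg (by omega), if_neg (by omega)]
      omega
    · have hik : p - k - 1 < k := by omega
      have hp2 := hpair (p - k - 1) (Finset.mem_range.mpr hik)
      rw [show k + 1 + (p - k - 1) = p by omega] at hp2
      rw [dstep, if_neg (by omega), if_pos (by omega), cdef (p - k - 1) hik,
        show k - (p - k - 1) = (k - 1 - (p - k - 1)) + 1 by omega]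
      have m1 := Fmono (Nat.le_succ (k - 1 - (p - k - 1)))
      rcases Nat.lt_or_ge (Ff k f (k - 1 - (p - k - 1)))
          (Ff k f ((k - 1 - (p - k - 1)) + 1)) with hlt | hge2
      · rw [decide_eq_true hlt, if_pos rfl]; omega
      · rw [decide_eq_false (by omega), if_neg (by simp)]; omega
  -- conclude
  intro t ht
  rw [Ff_telescope k f t, hF0, Nat.zero_add, Nc]
  refine Finset.sum_congr rfl fun p hp => ?_
  rw [Finset.mem_range] at hp
  rw [dstep_eq p (by omega)]

end EsdAux
namespace EsdAux

lemma extc_coe (k : ℕ) (c : Fin k → Bool) (i : Fin k) : extc k c i = c i := by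
  simp [extc, i.isLt]

lemma Ff_decode (k : ℕ) (c : Fin k → Bool) {x : ℕ} (hx : x ≤ 2 * k + 1) :
    Ff k (decodeF k c) x = Nc k c x := by
  rw [Ff_eq k _ hx]; rfl

lemma dstep_left (k : ℕ) (c : Fin k → Bool) (i : Fin k) :
    dstep k c (k - 1 - i) = if c i then 1 else 0 := by
  have hi := i.isLt
  rw [dstep, if_pos (by omega), show k - 1 - (k - 1 - (i : ℕ)) = (i : ℕ) by omega,
    extc_coe]

lemma dstep_right (k : ℕ) (c : Fin k → Bool) (i : Fin k) :
    dstep k c (k + 1 + i) = if c i then 0 else 1 := by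
  have hi := i.isLt
  rw [dstep, if_neg (by omega), if_pos (by omega),
    show k + 1 + (i : ℕ) - k - 1 = (i : ℕ) by omega, extc_coe]

lemma good_decode (k : ℕ) (c : Fin k → Bool) : Good k (decodeF k c) := by
  intro i
  have hi := i.isLt
  rw [Ff_decode k c (by omega), Ff_decode k c (by omega), Ff_decode k c (by omega),
    Ff_decode k c (by omega)]
  by_cases h : c i
  · left
    rw [show k - (i : ℕ) = (k - 1 - (i : ℕ)) + 1 by omega, Nc_succ, dstep_left, if_pos h]
    omega
  · right
    rw [show k + 2 + (i : ℕ) = (k + 1 + (i : ℕ)) + 1 by omega, Nc_succ, dstep_right,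
      if_neg h]
    omega

lemma encode_decode (k : ℕ) (c : Fin k → Bool) : encode k (decodeF k c) = c := by
  funext i
  have hi := i.isLt
  rw [encode, Ff_decode k c (by omega), Ff_decode k c (by omega),
    show k - (i : ℕ) = (k - 1 - (i : ℕ)) + 1 by omega, Nc_succ, dstep_left]
  by_cases h : c i <;> simp [h]

end EsdAux
namespace EsdAux

def sectFun (k : ℕ) (i : Fin k) (v : Fin (2 * k)) : Fin (2 * k + 2) :=
  if _h : (v : ℕ) < k then
    ⟨k - (if k - 1 - (v : ℕ) < (i : ℕ) then k - 1 - (v : ℕ) else k - (v : ℕ)), by omega⟩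
  else
    ⟨k + 1 + (if (v : ℕ) - k < (i : ℕ) then (v : ℕ) - k else (v : ℕ) - k + 1), by
      have := v.isLt; have := i.isLt; split <;> omega⟩

lemma sectFun_coe (k : ℕ) (i : Fin k) (v : Fin (2 * k)) :
    ((sectFun k i v : Fin (2 * k + 2)) : ℕ) =
      if (v : ℕ) < k then
        k - (if k - 1 - (v : ℕ) < (i : ℕ) then k - 1 - (v : ℕ) else k - (v : ℕ))
      else
        k + 1 + (if (v : ℕ) - k < (i : ℕ) then (v : ℕ) - k else (v : ℕ) - k + 1) := by
  unfold sectFun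
  split_ifs <;> rfl

/-- A monotone section of `esdDegen k i`, given by `ε(δᵢ)`. -/
def sect (k : ℕ) (i : Fin k) : Fin (2 * k) →o Fin (2 * k + 2) where
  toFun := sectFun k i
  monotone' a b hab := by
    have ha := a.isLt; have hb := b.isLt; have hi := i.isLt
    rw [Fin.le_def] at hab
    rw [Fin.le_def, sectFun_coe, sectFun_coe]
    split_ifs <;> omega

lemma sect_coe (k : ℕ) (i : Fin k) (v : Fin (2 * k)) :
    ((sect k i v : Fin (2 * k + 2)) : ℕ) =
      if (v : ℕ) < k then
        k - (if k - 1 - (v : ℕ) < (i : ℕ) then k - 1 - (v : ℕ) else k - (v : ℕ))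
      else
        k + 1 + (if (v : ℕ) - k < (i : ℕ) then (v : ℕ) - k else (v : ℕ) - k + 1) :=
  sectFun_coe k i v

lemma sect_esdDegen (k : ℕ) (i : Fin k) (t : Fin (2 * k + 2)) :
    ((sect k i (esdDegen k i t) : Fin (2 * k + 2)) : ℕ) = (t : ℕ)
    ∨ ((t : ℕ) = k - (i : ℕ)
        ∧ ((sect k i (esdDegen k i t) : Fin (2 * k + 2)) : ℕ) = k - 1 - (i : ℕ))
    ∨ ((t : ℕ) = k + 1 + (i : ℕ)
        ∧ ((sect k i (esdDegen k i t) : Fin (2 * k + 2)) : ℕ) = k + 2 + (i : ℕ)) := by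
  have ht := t.isLt; have hi := i.isLt
  rw [sect_coe, esdDegen_coe]
  split_ifs <;> omega

end EsdAux
namespace EsdAux

lemma exists_iff (k : ℕ) (f : Fin (2 * k + 2) →o Fin (k + 1)) :
    (∃ (i : Fin k) (g : Fin (2 * k) →o Fin (k + 1)),
        ∀ t, f t = g (esdDegen k i t)) ↔
      ∃ i : Fin k, Ff k f (k - 1 - i) = Ff k f (k - i)
        ∧ Ff k f (k + 1 + i) = Ff k f (k + 2 + i) := by
  constructor
  · rintro ⟨i, g, hg⟩
    have hi := i.isLt
    have key : ∀ (a b : ℕ) (ha : a ≤ 2 * k + 1) (hb : b ≤ 2 * k + 1),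
        esdDegen k i ⟨a, by omega⟩ = esdDegen k i ⟨b, by omega⟩ →
          Ff k f a = Ff k f b := by
      intro a b ha hb he
      rw [Ff_eq k f ha, Ff_eq k f hb, hg, hg, he]
    refine ⟨i, ?_, ?_⟩
    · refine key _ _ (by omega) (by omega) (Fin.ext ?_)
      rw [esdDegen_coe, esdDegen_coe]
      simp only [Fin.val_mk]
      split_ifs <;> omega
    · refine key _ _ (by omega) (by omega) (Fin.ext ?_)
      rw [esdDegen_coe, esdDegen_coe]
      simp only [Fin.val_mk]
      split_ifs <;> omega
  · rintro ⟨i, h1, h2⟩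
    have hi := i.isLt
    refine ⟨i, f.comp (sect k i), fun t => ?_⟩
    show f t = f (sect k i (esdDegen k i t))
    have ht := t.isLt
    apply Fin.val_injective
    rcases sect_esdDegen k i t with h | ⟨ht2, hs⟩ | ⟨ht2, hs⟩
    · exact congrArg (fun x => ((f x : Fin (k + 1)) : ℕ)) (Fin.ext h.symm)
    · have l1 : ((f t : Fin (k + 1)) : ℕ) = Ff k f (k - (i : ℕ)) := by
        rw [Ff_eq k f (by omega)]
        exact congrArg (fun x => ((f x : Fin (k + 1)) : ℕ)) (Fin.ext ht2)
      have l2 : ((f (sect k i (esdDegen k i t)) : Fin (k + 1)) : ℕ)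
          = Ff k f (k - 1 - (i : ℕ)) := by
        rw [Ff_eq k f (by omega)]
        exact congrArg (fun x => ((f x : Fin (k + 1)) : ℕ)) (Fin.ext hs)
      rw [l1, l2]
      exact h1.symm
    · have l1 : ((f t : Fin (k + 1)) : ℕ) = Ff k f (k + 1 + (i : ℕ)) := by
        rw [Ff_eq k f (by omega)]
        exact congrArg (fun x => ((f x : Fin (k + 1)) : ℕ)) (Fin.ext ht2)
      have l2 : ((f (sect k i (esdDegen k i t)) : Fin (k + 1)) : ℕ)
          = Ff k f (k + 2 + (i : ℕ)) := by
        rw [Ff_eq k f (by omega)]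
        exact congrArg (fun x => ((f x : Fin (k + 1)) : ℕ)) (Fin.ext hs)
      rw [l1, l2]
      exact h2
  
lemma not_exists_iff (k : ℕ) (f : Fin (2 * k + 2) →o Fin (k + 1)) :
    (¬ ∃ (i : Fin k) (g : Fin (2 * k) →o Fin (k + 1)),
        ∀ t, f t = g (esdDegen k i t)) ↔ Good k f := by
  rw [exists_iff]
  constructor
  · intro h i
    have hi := i.isLt
    have m1 := Ff_mono k f (show k - 1 - (i : ℕ) ≤ k - (i : ℕ) by omega)
    have m2 := Ff_mono k f (show k + 1 + (i : ℕ) ≤ k + 2 + (i : ℕ) by omega)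
    by_contra hc
    push_neg at hc
    exact h ⟨i, by omega, by omega⟩
  · rintro hg ⟨i, h1, h2⟩
    rcases hg i with h | h <;> omega

end EsdAux


/-- The edgewise subdivision of the standard `k`-simplex has exactly `2^k`
nondegenerate `k`-simplices: a `k`-simplex of `esd(Δ[k])` is an
order-preserving map `[2k+1] → [k]`, and it is nondegenerate when it does not
factor through any `ε(σᵢ)`, i.e. is not in the image of any degeneracy map of
`esd(Δ[k])`. -/
theorem esd_standard_simplex_nondegenerate_card (k : ℕ) :
    Nat.card { f : Fin (2 * k + 2) →o Fin (k + 1) //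
      ¬ ∃ (i : Fin k) (g : Fin (2 * k) →o Fin (k + 1)),
        ∀ t, f t = g (esdDegen k i t) } = 2 ^ k := by
  have e : { f : Fin (2 * k + 2) →o Fin (k + 1) //
      ¬ ∃ (i : Fin k) (g : Fin (2 * k) →o Fin (k + 1)),
        ∀ t, f t = g (esdDegen k i t) } ≃ (Fin k → Bool) :=
  { toFun := fun f => EsdAux.encode k f.1
    invFun := fun c => ⟨EsdAux.decodeF k c,
      (EsdAux.not_exists_iff k _).mpr (EsdAux.good_decode k c)⟩
    left_inv := by
      rintro ⟨f, hf⟩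
      have hg := (EsdAux.not_exists_iff k f).mp hf
      apply Subtype.ext
      apply OrderHom.ext
      funext t
      apply Fin.val_injective
      show EsdAux.Nc k (EsdAux.encode k f) (t : ℕ) = ((f t : Fin (k + 1)) : ℕ)
      rw [← EsdAux.main k f hg (t : ℕ) (by have := t.isLt; omega),
        EsdAux.Ff_eq k f (by have := t.isLt; omega)]
    right_inv := fun c => EsdAux.encode_decode k c }
  rw [Nat.card_congr e]
  simp [Nat.card_eq_fintype_card]
end
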